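/- In the non-reduced irreducible root system of type BC_ℓ there are no low triples. (For BC_ℓ the weight lattice equals the root lattice of C_ℓ and Σ_{i=h}^ℓ αᵢ = ω_h − ω_{h−1}; hence for any dominant λ appearing in a low triple and any index h, one could subtract Σ_{i=h}^ℓ αᵢ if h ∈ supp λ, contradicting minimality, so supp λ = supp μ = ∅ and λ = μ = 0, which violates ν + Σαᵢ ≤ λ+μ.) -/

import Mathlib

open scoped RealInnerProductSpace

noncomputable section

variable {E : Type*} [NormedAddCommGroup E] [InnerProductSpace ℝ E]

/-- The pairing `⟨x, α∨⟩ = 2(x,α)/(α,α)`. -/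
def cpair (x α : E) : ℝ := 2 * ⟪x, α⟫ / ⟪α, α⟫

/-- Reflection in the hyperplane orthogonal to `α`. -/
def wrefl (α x : E) : E := x - cpair x α • α

/-- An irreducible, possibly non-reduced, root system with a chosen base. -/
structure NRRootSystemData (ℓ : ℕ) (E : Type*) [NormedAddCommGroup E]
    [InnerProductSpace ℝ E] where
  roots : Finset E
  simple : Fin ℓ → E
  simple_mem : ∀ i, simple i ∈ roots
  root_ne_zero : ∀ α ∈ roots, α ≠ 0
  cpair_int : ∀ α ∈ roots, ∀ β ∈ roots, ∃ n : ℤ, cpair β α = (n : ℝ)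
  reflect_mem : ∀ α ∈ roots, ∀ β ∈ roots, wrefl α β ∈ roots
  simple_indep : LinearIndependent ℝ simple
  root_decomp : ∀ α ∈ roots,
    (∃ c : Fin ℓ → ℕ, α = ∑ i, (c i : ℝ) • simple i) ∨
    (∃ c : Fin ℓ → ℕ, α = -∑ i, (c i : ℝ) • simple i)
  irred : ∀ S : Finset (Fin ℓ), S.Nonempty →
    (∀ i ∈ S, ∀ j ∉ S, ⟪simple i, simple j⟫ = 0) → S = Finset.univ

namespace NRRootSystemData

variable {ℓ : ℕ} (R : NRRootSystemData ℓ E)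

/-- Integral weights: `⟨x, α∨⟩ ∈ ℤ` for every root `α` (for BC this is the
C-type weight lattice, since `2α_ℓ` is a root). -/
def IsIntegral (x : E) : Prop := ∀ α ∈ R.roots, ∃ n : ℤ, cpair x α = (n : ℝ)

/-- Dominant (integral) weights. -/
def IsDominant (x : E) : Prop :=
  R.IsIntegral x ∧ ∀ i, 0 ≤ cpair x (R.simple i)

/-- Dominant order: `R.wle μ λ` means `μ ≤ λ`. -/
def wle (μ lam : E) : Prop :=
  ∃ c : Fin ℓ → ℕ, lam - μ = ∑ i, (c i : ℝ) • R.simple i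

/-- Low triples of dominant weights. -/
def LowTriple (lam mu nu : E) : Prop :=
  R.IsDominant lam ∧ R.IsDominant mu ∧ R.IsDominant nu ∧
  (∀ lam' mu' : E, R.IsDominant lam' → R.IsDominant mu' →
    R.wle lam' lam → R.wle mu' mu → R.wle nu (lam' + mu') → lam' = lam ∧ mu' = mu) ∧
  R.wle (nu + ∑ i, R.simple i) (lam + mu)

/-- `R` is of type BC_ℓ: the simple roots form a B_ℓ Cartan matrix, `2α_ℓ` is a
root, and `2α_i` is not a root for `i < ℓ`. -/
def IsTypeBC : Prop :=
  (∀ i j : Fin ℓ, cpair (R.simple j) (R.simple i) =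
    if i = j then 2
    else if (j : ℕ) + 1 = (i : ℕ) ∧ (i : ℕ) = ℓ - 1 then -2
    else if (i : ℕ) + 1 = (j : ℕ) ∨ (j : ℕ) + 1 = (i : ℕ) then -1 else 0) ∧
  ∀ i : Fin ℓ, ((i : ℕ) = ℓ - 1 → (2 : ℝ) • R.simple i ∈ R.roots) ∧
    ((i : ℕ) < ℓ - 1 → (2 : ℝ) • R.simple i ∉ R.roots)

end NRRootSystemData

/-! ### Auxiliary lemmas -/

lemma cpair_sub (x y α : E) : cpair (x - y) α = cpair x α - cpair y α := by
  simp only [cpair, inner_sub_left]; ring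

lemma cpair_add (x y α : E) : cpair (x + y) α = cpair x α + cpair y α := by
  simp only [cpair, inner_add_left]; ring

lemma cpair_smul (c : ℝ) (x α : E) : cpair (c • x) α = c * cpair x α := by
  simp only [cpair, real_inner_smul_left]; ring

lemma cpair_sum {ι : Type*} (s : Finset ι) (f : ι → E) (α : E) :
    cpair (∑ i ∈ s, f i) α = ∑ i ∈ s, cpair (f i) α := by
  simp only [cpair, sum_inner, Finset.mul_sum, Finset.sum_div]

lemma cpair_two_smul (x α : E) (hα : α ≠ 0) :
    cpair x ((2:ℝ) • α) = cpair x α / 2 := by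
  have h : ⟪α, α⟫ ≠ 0 := inner_self_ne_zero.mpr hα
  simp only [cpair, real_inner_smul_right, real_inner_smul_left]
  field_simp

lemma inner_self_pos' (α : E) (hα : α ≠ 0) : 0 < ⟪α, α⟫ :=
  lt_of_le_of_ne real_inner_self_nonneg (Ne.symm (inner_self_ne_zero.mpr hα))

lemma spike1 {ℓ : ℕ} (m : ℕ) (v : ℝ) :
    ∑ i : Fin ℓ, (if (i:ℕ) = m then v else 0) = if m < ℓ then v else 0 := by
  split_ifs with hm
  · have h : ∀ i : Fin ℓ, (if (i:ℕ) = m then v else 0)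
        = if i = (⟨m, hm⟩ : Fin ℓ) then v else 0 := by
      intro i; simp [Fin.ext_iff]
    simp [h]
  · apply Finset.sum_eq_zero; intro i _
    rw [if_neg]; intro h; exact hm (h ▸ i.isLt)

lemma spike2 {ℓ : ℕ} (m : ℕ) (v : ℝ) :
    ∑ i : Fin ℓ, (if (i:ℕ) + 1 = m then v else 0)
      = if 1 ≤ m ∧ m ≤ ℓ then v else 0 := by
  rcases Nat.eq_zero_or_pos m with hm | hm
  · subst hm; simp
  · have h : ∀ i : Fin ℓ, (if (i:ℕ) + 1 = m then v else 0)
        = if (i:ℕ) = m - 1 then v else 0 := by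
      intro i; congr 1; simp; omega
    rw [Finset.sum_congr rfl fun i _ => h i, spike1]
    congr 1; simp; omega

set_option maxHeartbeats 1000000 in
/-- The pairing of `β_h = ∑_{i ≥ h} α_i` against each simple coroot in type BC. -/
lemma Tval {ℓ : ℕ} (b : Fin ℓ → E)
    (hA : ∀ i j : Fin ℓ, cpair (b j) (b i) =
      if i = j then 2
      else if (j : ℕ) + 1 = (i : ℕ) ∧ (i : ℕ) = ℓ - 1 then -2
      else if (i : ℕ) + 1 = (j : ℕ) ∨ (j : ℕ) + 1 = (i : ℕ) then -1 else 0)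
    (h j : Fin ℓ) :
    ∑ i : Fin ℓ, (if (h:ℕ) ≤ (i:ℕ) then (1:ℝ) else 0) * cpair (b i) (b j)
      = if (j:ℕ) = (h:ℕ) then (if (h:ℕ) = ℓ - 1 then 2 else 1)
        else if (j:ℕ) + 1 = (h:ℕ) then -1 else 0 := by
  have e : ∀ i : Fin ℓ,
      (if (h:ℕ) ≤ (i:ℕ) then (1:ℝ) else 0) * cpair (b i) (b j)
      = (if (i:ℕ) = (j:ℕ) then (if (h:ℕ) ≤ (j:ℕ) then (2:ℝ) else 0) else 0)
      + (if (i:ℕ) = (j:ℕ) + 1 then (if (h:ℕ) ≤ (j:ℕ)+1 then (-1:ℝ) else 0) else 0)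
      + (if (i:ℕ) + 1 = (j:ℕ) then
          (if (h:ℕ)+1 ≤ (j:ℕ) then (if (j:ℕ) = ℓ - 1 then (-2:ℝ) else -1) else 0) else 0) := by
    intro i
    rw [hA j i]
    simp only [Fin.ext_iff]
    split_ifs <;> first | omega | norm_num
  rw [Finset.sum_congr rfl fun i _ => e i]
  rw [Finset.sum_add_distrib, Finset.sum_add_distrib, spike1, spike1, spike2]
  have hj := j.isLt
  have hh := h.isLt
  rw [if_pos hj]
  split_ifs <;> first | omega | norm_num

variable {ℓ : ℕ}

/-- In the non-reduced irreducible root system of type BC_ℓ there are no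
low triples. -/
theorem statement12 (R : NRRootSystemData ℓ E) (hℓ : 1 ≤ ℓ)
    (hBC : R.IsTypeBC) :
    ∀ lam mu nu : E, ¬ R.LowTriple lam mu nu := by
  obtain ⟨hA, h2⟩ := hBC
  rintro lam mu nu ⟨hlam, hmu, hnu, hmin, d, hd⟩
  -- key step: any weight in a minimal pair has all simple pairings zero
  have key : ∀ x y : E, R.IsDominant x →
      (x + y) - (nu + ∑ i, R.simple i) = ∑ i, (d i : ℝ) • R.simple i →
      (∀ x' : E, R.IsDominant x' → R.wle x' x → R.wle nu (x' + y) → x' = x) →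
      ∀ h : Fin ℓ, cpair x (R.simple h) = 0 := by
    intro x y hx hxy hminx h
    by_contra hne
    have hpos : 0 < cpair x (R.simple h) := lt_of_le_of_ne (hx.2 h) (Ne.symm hne)
    set c : Fin ℓ → ℕ := fun i => if (h:ℕ) ≤ (i:ℕ) then 1 else 0 with hc
    set β : E := ∑ i, (c i : ℝ) • R.simple i with hβ
    have hcast : ∀ i, ((c i : ℕ) : ℝ) = if (h:ℕ) ≤ (i:ℕ) then (1:ℝ) else 0 := by
      intro i; simp only [hc]; split_ifs <;> norm_num
    have hβpair : ∀ j : Fin ℓ, cpair β (R.simple j)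
        = if (j:ℕ) = (h:ℕ) then (if (h:ℕ) = ℓ - 1 then 2 else 1)
          else if (j:ℕ) + 1 = (h:ℕ) then -1 else 0 := by
      intro j
      rw [hβ, cpair_sum]
      rw [Finset.sum_congr rfl fun i _ => by rw [cpair_smul, hcast i]]
      exact Tval R.simple hA h j
    -- x - β is dominant
    have hdom : R.IsDominant (x - β) := by
      constructor
      · intro α hα
        obtain ⟨n, hn⟩ := hx.1 α hα
        choose g hg using fun i => R.cpair_int α hα (R.simple i) (R.simple_mem i)
        refine ⟨n - ∑ i, (c i : ℤ) * g i, ?_⟩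
        rw [cpair_sub, hn, hβ, cpair_sum]
        rw [Finset.sum_congr rfl fun i (_ : i ∈ Finset.univ) => by rw [cpair_smul, hg i]]
        push_cast
        ring
      · intro j
        rw [cpair_sub, hβpair j]
        rcases eq_or_ne ((j:ℕ)) ((h:ℕ)) with hjh | hjh
        · have hbj : R.simple j = R.simple h := by
            congr 1; exact Fin.ext hjh
          rw [if_pos hjh, hbj]
          by_cases hlast : (h:ℕ) = ℓ - 1
          · rw [if_pos hlast]
            obtain ⟨m, hm⟩ := hx.1 ((2:ℝ) • R.simple h) ((h2 h).1 hlast)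
            rw [cpair_two_smul _ _ (R.root_ne_zero _ (R.simple_mem h))] at hm
            have h2m : cpair x (R.simple h) = 2 * (m:ℝ) := by linarith
            have hm0 : (0:ℝ) < (m:ℝ) := by nlinarith
            have hm1 : (1:ℤ) ≤ m := by exact_mod_cast hm0
            have : (1:ℝ) ≤ (m:ℝ) := by exact_mod_cast hm1
            linarith
          · rw [if_neg hlast]
            obtain ⟨n, hn⟩ := hx.1 (R.simple h) (R.simple_mem h)
            have hn0 : (0:ℝ) < (n:ℝ) := by rw [← hn]; exact hpos
            have hn1 : (1:ℤ) ≤ n := by exact_mod_cast hn0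
            have : (1:ℝ) ≤ (n:ℝ) := by exact_mod_cast hn1
            rw [hn]; linarith
        · rw [if_neg hjh]
          have := hx.2 j
          split_ifs <;> linarith
    -- x - β ≤ x
    have hwle : R.wle (x - β) x := ⟨c, by rw [hβ]; abel⟩
    -- nu ≤ (x - β) + y
    have hwnu : R.wle nu ((x - β) + y) := by
      refine ⟨fun i => d i + 1 - c i, ?_⟩
      have hcle : ∀ i, c i ≤ d i + 1 := by
        intro i; simp only [hc]; split_ifs <;> omega
      have hsum : ∑ i, ((d i + 1 - c i : ℕ) : ℝ) • R.simple i
          = (∑ i, (d i : ℝ) • R.simple i) + (∑ i, R.simple i) - β := by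
        rw [hβ, ← Finset.sum_add_distrib, ← Finset.sum_sub_distrib]
        refine Finset.sum_congr rfl fun i _ => ?_
        have : ((d i + 1 - c i : ℕ) : ℝ) = (d i : ℝ) + 1 - (c i : ℝ) := by
          rw [Nat.cast_sub (hcle i)]; push_cast; ring
        rw [this, sub_smul, add_smul, one_smul]
      rw [hsum, ← hxy]; abel
    have hx' := hminx (x - β) hdom hwle hwnu
    have hβ0 : β = 0 := by
      have := sub_eq_self.mp hx'
      exact this
    have hch := Fintype.linearIndependent_iff.mp R.simple_indep
      (fun i => (c i : ℝ)) (by rw [← hβ, hβ0]) h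
    simp only [hc, le_refl, if_pos] at hch
    norm_num at hch
  -- apply to lam and mu
  have wrefl' : R.wle lam lam := ⟨fun _ => 0, by simp⟩
  have wreflmu : R.wle mu mu := ⟨fun _ => 0, by simp⟩
  have hlam0 : ∀ h, cpair lam (R.simple h) = 0 := by
    refine key lam mu hlam hd ?_
    intro x' hx' hle hnle
    exact (hmin x' mu hx' hmu hle wreflmu hnle).1
  have hmu0 : ∀ h, cpair mu (R.simple h) = 0 := by
    refine key mu lam hmu (by rw [add_comm]; exact hd) ?_
    intro x' hx' hle hnle
    refine (hmin lam x' hlam hx' wrefl' hle ?_).2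
    rwa [add_comm]
  -- final contradiction
  set e : Fin ℓ → ℝ := fun i => (d i : ℝ) + 1 with he
  set z : E := ∑ i, e i • R.simple i with hz
  have hnu_eq : ∀ j : Fin ℓ, cpair nu (R.simple j) = - cpair z (R.simple j) := by
    intro j
    have hnu' : nu = lam + mu - (∑ i, R.simple i) - ∑ i, (d i : ℝ) • R.simple i := by
      rw [← hd]; abel
    have hzsplit : cpair z (R.simple j)
        = cpair (∑ i, (d i : ℝ) • R.simple i) (R.simple j)
          + cpair (∑ i, R.simple i) (R.simple j) := by
      rw [hz, cpair_sum, cpair_sum, cpair_sum, ← Finset.sum_add_distrib]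
      refine Finset.sum_congr rfl fun i _ => ?_
      rw [cpair_smul, cpair_smul, he]
      ring
    rw [hnu', cpair_sub, cpair_sub, cpair_add, hlam0 j, hmu0 j, hzsplit]
    ring
  have hzj : ∀ j : Fin ℓ, ⟪z, R.simple j⟫ ≤ 0 := by
    intro j
    have h1 : cpair z (R.simple j) ≤ 0 := by
      have := hnu.2 j; rw [hnu_eq j] at this; linarith
    have hbpos : 0 < ⟪R.simple j, R.simple j⟫ :=
      inner_self_pos' _ (R.root_ne_zero _ (R.simple_mem j))
    by_contra hcon
    push_neg at hcon
    have : 0 < cpair z (R.simple j) := by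
      unfold cpair; positivity
    linarith
  have hzz : ⟪z, z⟫ ≤ 0 := by
    have hzr : ⟪z, z⟫ = ∑ j, e j * ⟪z, R.simple j⟫ := by
      conv_lhs => rw [show z = ∑ j, e j • R.simple j from hz]
      rw [inner_sum]
      exact Finset.sum_congr rfl fun j _ => by rw [real_inner_smul_right]
    rw [hzr]
    refine Finset.sum_nonpos fun j _ => ?_
    have : (0:ℝ) ≤ e j := by rw [he]; positivity
    exact mul_nonpos_of_nonneg_of_nonpos this (hzj j)
  have hz0 : z = 0 := inner_self_eq_zero.mp (le_antisymm hzz real_inner_self_nonneg)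
  have hcontr := Fintype.linearIndependent_iff.mp R.simple_indep e (by rw [← hz, hz0]) ⟨0, hℓ⟩
  rw [he] at hcontr
  simp only at hcontr
  have : (0:ℝ) ≤ (d ⟨0, hℓ⟩ : ℝ) := Nat.cast_nonneg _
  linarith
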